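/- Let λ_1, λ_2 ∈ ℂ be nonzero scalars with λ_1² − λ_1·λ_2 + λ_2² ≠ 0. Then there exists a simple 2-dimensional representation of B_3 whose first generator has eigenvalues λ_1 and λ_2; that is, there exist invertible matrices A, B ∈ M_2(ℂ) with A·B·A = B·A·B, the characteristic polynomial of A equal to (x − λ_1)(x − λ_2), and the ℂ-subalgebra of M_2(ℂ) generated by A and B equal to M_2(ℂ). -/
import Mathlib


open Matrix Polynomial

/-- for nonzero `λ₁, λ₂ ∈ ℂ` with `λ₁² − λ₁λ₂ + λ₂² ≠ 0`, there exists a simple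
2-dimensional representation of `B₃` whose first generator has characteristic polynomial
`(x − λ₁)(x − λ₂)`. -/
theorem exists_simple_dim2_rep (l1 l2 : ℂ) (h1 : l1 ≠ 0) (h2 : l2 ≠ 0)
    (hQ : l1 ^ 2 - l1 * l2 + l2 ^ 2 ≠ 0) :
    ∃ A B : Matrix (Fin 2) (Fin 2) ℂ, IsUnit A ∧ IsUnit B ∧
      A * B * A = B * A * B ∧
      A.charpoly = (X - C l1) * (X - C l2) ∧
      Algebra.adjoin ℂ ({A, B} : Set (Matrix (Fin 2) (Fin 2) ℂ)) = ⊤ := by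
  set A : Matrix (Fin 2) (Fin 2) ℂ := !![l1, 1; 0, l2] with hAdef
  set B : Matrix (Fin 2) (Fin 2) ℂ := !![l2, 0; -(l1*l2), l1] with hBdef
  refine ⟨A, B, ?_, ?_, ?_, ?_, ?_⟩
  · rw [isUnit_iff_isUnit_det]
    have : A.det = l1 * l2 := by simp [hAdef, Matrix.det_fin_two_of]
    rw [this]
    exact isUnit_iff_ne_zero.2 (mul_ne_zero h1 h2)
  · rw [isUnit_iff_isUnit_det]
    have : B.det = l1 * l2 := by simp [hBdef, Matrix.det_fin_two_of]; ring
    rw [this]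
    exact isUnit_iff_ne_zero.2 (mul_ne_zero h1 h2)
  · ext i j
    fin_cases i <;> fin_cases j <;>
      simp [hAdef, hBdef, Matrix.mul_apply, Fin.sum_univ_two] <;> ring
  · rw [Matrix.charpoly, Matrix.det_fin_two]
    simp [charmatrix_apply_eq, charmatrix_apply_ne, hAdef]
  · set S := Algebra.adjoin ℂ ({A, B} : Set (Matrix (Fin 2) (Fin 2) ℂ)) with hS
    have hA : A ∈ S := Algebra.subset_adjoin (by simp)
    have hB : B ∈ S := Algebra.subset_adjoin (by simp)
    set E11 : Matrix (Fin 2) (Fin 2) ℂ := !![1, 0; 0, 0] with hE11def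
    set E12 : Matrix (Fin 2) (Fin 2) ℂ := !![0, 1; 0, 0] with hE12def
    set E21 : Matrix (Fin 2) (Fin 2) ℂ := !![0, 0; 1, 0] with hE21def
    set E22 : Matrix (Fin 2) (Fin 2) ℂ := !![0, 0; 0, 1] with hE22def
    have hP : (A - l2 • 1) * (B - l1 • 1) = (-(l1 ^ 2 - l1 * l2 + l2 ^ 2)) • E11 := by
      ext i j
      fin_cases i <;> fin_cases j <;>
        simp [hAdef, hBdef, hE11def, Matrix.mul_apply, Fin.sum_univ_two,
          Matrix.one_apply] <;> ring
    have hPmem : (A - l2 • 1) * (B - l1 • 1) ∈ S :=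
      mul_mem (sub_mem hA (SMulMemClass.smul_mem _ (one_mem S)))
        (sub_mem hB (SMulMemClass.smul_mem _ (one_mem S)))
    have h11 : E11 ∈ S := by
      have hne : (-(l1 ^ 2 - l1 * l2 + l2 ^ 2)) ≠ 0 := neg_ne_zero.2 hQ
      have : E11 = (-(l1 ^ 2 - l1 * l2 + l2 ^ 2))⁻¹ • ((A - l2 • 1) * (B - l1 • 1)) := by
        rw [hP, smul_smul, inv_mul_cancel₀ hne, one_smul]
      rw [this]
      exact SMulMemClass.smul_mem _ hPmem
    have h12eq : E11 * A - l1 • E11 = E12 := by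
      ext i j
      fin_cases i <;> fin_cases j <;>
        simp [hAdef, hE11def, hE12def, Matrix.mul_apply, Fin.sum_univ_two]
    have h12 : E12 ∈ S := by
      rw [← h12eq]
      exact sub_mem (mul_mem h11 hA) (SMulMemClass.smul_mem _ h11)
    have h21eq : (B - l1 • 1) * E11 - (l2 - l1) • E11 = (-(l1 * l2)) • E21 := by
      ext i j
      fin_cases i <;> fin_cases j <;>
        simp [hBdef, hE11def, hE21def, Matrix.mul_apply, Fin.sum_univ_two,
          Matrix.one_apply] <;> ring
    have h21 : E21 ∈ S := by
      have hne : (-(l1 * l2)) ≠ 0 := neg_ne_zero.2 (mul_ne_zero h1 h2)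
      have : E21 = (-(l1 * l2))⁻¹ • ((B - l1 • 1) * E11 - (l2 - l1) • E11) := by
        rw [h21eq, smul_smul, inv_mul_cancel₀ hne, one_smul]
      rw [this]
      exact SMulMemClass.smul_mem _
        (sub_mem (mul_mem (sub_mem hB (SMulMemClass.smul_mem _ (one_mem S))) h11)
          (SMulMemClass.smul_mem _ h11))
    have h22 : E22 ∈ S := by
      have : E22 = 1 - E11 := by
        ext i j
        fin_cases i <;> fin_cases j <;> simp [hE11def, hE22def, Matrix.one_apply]
      rw [this]
      exact sub_mem (one_mem S) h11
    rw [eq_top_iff]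
    intro M _
    have hM : M = M 0 0 • E11 + M 0 1 • E12 + M 1 0 • E21 + M 1 1 • E22 := by
      ext i j
      fin_cases i <;> fin_cases j <;>
        simp [hE11def, hE12def, hE21def, hE22def]
    rw [hM]
    exact add_mem (add_mem (add_mem (SMulMemClass.smul_mem _ h11)
      (SMulMemClass.smul_mem _ h12)) (SMulMemClass.smul_mem _ h21))
      (SMulMemClass.smul_mem _ h22)
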